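/- Let λ12, λ13, λ23 ∈ [0,1] satisfy 1 ≤ λ12+λ13+λ23 ≤ 1 + 2·min{λ12,λ13,λ23}. Let U be uniform on [0,1] and B3 ~ Bernoulli(1/2) independent of U. Define X1 = 1{U ≤ λ13}, X2 = 1{U ∈ [(1+λ13−λ23−λ12)/2, (1+λ13+λ23−λ12)/2]}, B1 = B3·X1 + (1−B3)(1−X1), B2 = B3·X2 + (1−B3)(1−X2). Then B1, B2, B3 each have Bernoulli(1/2) marginals and P(Bi = Bj) = λij for all i < j. -/

import Mathlib

open MeasureTheory ProbabilityTheory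

theorem stmt13 {Ω : Type*} [MeasureSpace Ω] [IsProbabilityMeasure (ℙ : Measure Ω)]
    (l12 l13 l23 : ℝ)
    (h12 : l12 ∈ Set.Icc (0:ℝ) 1) (h13 : l13 ∈ Set.Icc (0:ℝ) 1)
    (h23 : l23 ∈ Set.Icc (0:ℝ) 1)
    (hs1 : 1 ≤ l12 + l13 + l23)
    (hs2 : l12 + l13 + l23 ≤ 1 + 2 * min (min l12 l13) l23)
    (U : Ω → ℝ) (B3 : Ω → Bool) (hU : Measurable U) (hB3 : Measurable B3)
    (hUdist : Measure.map U ℙ = volume.restrict (Set.Icc 0 1))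
    (hB3dist : ℙ {ω | B3 ω = true} = 1/2)
    (hindep : IndepFun U B3 ℙ) :
    let X1 : Ω → Bool := fun ω => decide (U ω ≤ l13)
    let X2 : Ω → Bool := fun ω =>
      decide (U ω ∈ Set.Icc ((1 + l13 - l23 - l12)/2) ((1 + l13 + l23 - l12)/2))
    let B1 : Ω → Bool := fun ω => if B3 ω then X1 ω else !(X1 ω)
    let B2 : Ω → Bool := fun ω => if B3 ω then X2 ω else !(X2 ω)
    ℙ {ω | B1 ω = true} = 1/2 ∧ ℙ {ω | B2 ω = true} = 1/2 ∧
    ℙ {ω | B1 ω = B2 ω} = ENNReal.ofReal l12 ∧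
    ℙ {ω | B1 ω = B3 ω} = ENNReal.ofReal l13 ∧
    ℙ {ω | B2 ω = B3 ω} = ENNReal.ofReal l23 := by
  obtain ⟨h12a, h12b⟩ := h12
  obtain ⟨h13a, h13b⟩ := h13
  obtain ⟨h23a, h23b⟩ := h23
  have hm12 : min (min l12 l13) l23 ≤ l12 := le_trans (min_le_left _ _) (min_le_left _ _)
  have hm13 : min (min l12 l13) l23 ≤ l13 := le_trans (min_le_left _ _) (min_le_right _ _)
  have hm23 : min (min l12 l13) l23 ≤ l23 := min_le_right _ _
  intro X1 X2 B1 B2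
  set a : ℝ := (1 + l13 - l23 - l12)/2 with ha_def
  set b : ℝ := (1 + l13 + l23 - l12)/2 with hb_def
  have ha0 : 0 ≤ a := by rw [ha_def]; linarith
  have hb1 : b ≤ 1 := by rw [hb_def]; linarith
  have hal : a ≤ l13 := by rw [ha_def]; linarith
  have hlb : l13 ≤ b := by rw [hb_def]; linarith
  -- measure of U-preimages
  have hmeasU : ∀ s : Set ℝ, MeasurableSet s → ℙ (U ⁻¹' s) = volume (s ∩ Set.Icc 0 1) := by
    intro s hs
    rw [← Measure.map_apply hU hs, hUdist, Measure.restrict_apply hs]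
  -- measurability of the indicator functions on ℝ
  have hf1 : Measurable (fun x : ℝ => decide (x ≤ l13)) := by
    have he : (fun x : ℝ => decide (x ≤ l13))
        = fun x => if x ∈ Set.Iic l13 then true else false := by
      funext x; by_cases h : x ≤ l13 <;> simp [h, Set.mem_Iic]
    rw [he]
    exact Measurable.ite measurableSet_Iic measurable_const measurable_const
  have hf2 : Measurable (fun x : ℝ => decide (x ∈ Set.Icc a b)) := by
    have he : (fun x : ℝ => decide (x ∈ Set.Icc a b))
        = fun x => if x ∈ Set.Icc a b then true else false := by
      funext x; by_cases h : x ∈ Set.Icc a b <;> simp [h]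
    rw [he]
    exact Measurable.ite measurableSet_Icc measurable_const measurable_const
  have hX1meas : Measurable X1 := hf1.comp hU
  have hX2meas : Measurable X2 := hf2.comp hU
  have hind1 : IndepFun X1 B3 ℙ := hindep.comp hf1 measurable_id
  have hind2 : IndepFun X2 B3 ℙ := hindep.comp hf2 measurable_id
  -- the events in terms of U
  have hX1set : X1 ⁻¹' {true} = U ⁻¹' Set.Iic l13 := by
    ext ω; simp [X1, Set.mem_Iic]
  have hX2set : X2 ⁻¹' {true} = U ⁻¹' Set.Icc a b := by
    ext ω; simp [X2, ha_def, hb_def]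
  have pX1 : ℙ (X1 ⁻¹' {true}) = ENNReal.ofReal l13 := by
    rw [hX1set, hmeasU _ measurableSet_Iic]
    have h : Set.Iic l13 ∩ Set.Icc 0 1 = Set.Icc 0 l13 := by
      ext x
      simp only [Set.mem_inter_iff, Set.mem_Iic, Set.mem_Icc]
      constructor
      · rintro ⟨h1, h2, h3⟩; exact ⟨h2, h1⟩
      · rintro ⟨h1, h2⟩; exact ⟨h2, h1, le_trans h2 h13b⟩
    rw [h, Real.volume_Icc]
    norm_num
  have pX2 : ℙ (X2 ⁻¹' {true}) = ENNReal.ofReal l23 := by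
    rw [hX2set, hmeasU _ measurableSet_Icc]
    have h : Set.Icc a b ∩ Set.Icc 0 1 = Set.Icc a b :=
      Set.inter_eq_left.mpr (Set.Icc_subset_Icc ha0 hb1)
    rw [h, Real.volume_Icc]
    congr 1
    rw [ha_def, hb_def]; ring
  -- the marginal computation
  have hB3t : ℙ (B3 ⁻¹' {true}) = 1/2 := hB3dist
  have hB3f : ℙ (B3 ⁻¹' {false}) = 1/2 := by
    have hc : B3 ⁻¹' {false} = (B3 ⁻¹' {true})ᶜ := by
      ext ω; cases h : B3 ω <;> simp [h]
    rw [hc, prob_compl_eq_one_sub (hB3 (measurableSet_singleton true)), hB3t, one_div,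
      ENNReal.one_sub_inv_two]
  have marg : ∀ X : Ω → Bool, Measurable X → IndepFun X B3 ℙ →
      ℙ {ω | (if B3 ω then X ω else !(X ω)) = true} = 1/2 := by
    intro X hX hXB
    have hcompl : X ⁻¹' {false} = (X ⁻¹' {true})ᶜ := by
      ext ω; cases h : X ω <;> simp [h]
    have hq : ℙ (X ⁻¹' {false}) = 1 - ℙ (X ⁻¹' {true}) := by
      rw [hcompl, prob_compl_eq_one_sub (hX (measurableSet_singleton true))]
    have hpq : ℙ (X ⁻¹' {true}) + ℙ (X ⁻¹' {false}) = 1 := by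
      rw [hq, add_tsub_cancel_of_le prob_le_one]
    have hset : {ω | (if B3 ω then X ω else !(X ω)) = true}
        = (X ⁻¹' {true} ∩ B3 ⁻¹' {true}) ∪ (X ⁻¹' {false} ∩ B3 ⁻¹' {false}) := by
      ext ω
      cases h3 : B3 ω <;> cases h1 : X ω <;> simp [h3, h1]
    have hdisj : Disjoint (X ⁻¹' {true} ∩ B3 ⁻¹' {true}) (X ⁻¹' {false} ∩ B3 ⁻¹' {false}) := by
      apply Set.disjoint_left.mpr
      rintro ω ⟨-, h1⟩ ⟨-, h2⟩
      simp_all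
    have hmeas2 : MeasurableSet (X ⁻¹' {false} ∩ B3 ⁻¹' {false}) :=
      (hX (measurableSet_singleton false)).inter (hB3 (measurableSet_singleton false))
    rw [hset, measure_union hdisj hmeas2,
      hXB.measure_inter_preimage_eq_mul _ _ (measurableSet_singleton true)
        (measurableSet_singleton true),
      hXB.measure_inter_preimage_eq_mul _ _ (measurableSet_singleton false)
        (measurableSet_singleton false),
      hB3t, hB3f, ← add_mul, hpq, one_mul]
  refine ⟨marg X1 hX1meas hind1, marg X2 hX2meas hind2, ?_, ?_, ?_⟩
  · -- P(B1 = B2) = l12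
    have hset12 : {ω | B1 ω = B2 ω} = U ⁻¹' (Set.Icc a l13 ∪ Set.Ioi b) := by
      ext ω
      have hred : (B1 ω = B2 ω) ↔ (X1 ω = X2 ω) := by
        cases h : B3 ω <;> simp [B1, B2, h]
      simp only [Set.mem_setOf_eq, Set.mem_preimage, hred, X1, X2, decide_eq_decide,
        Set.mem_union, Set.mem_Icc, Set.mem_Ioi]
      constructor
      · intro h
        by_cases hx : U ω ≤ l13
        · exact Or.inl ⟨(h.mp hx).1, hx⟩
        · right
          by_contra hb'
          push_neg at hb'
          exact hx (h.mpr ⟨by linarith, by linarith⟩)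
      · rintro (⟨h1, h2⟩ | h1)
        · exact ⟨fun _ => ⟨h1, by linarith⟩, fun _ => h2⟩
        · exact ⟨fun h2 => absurd h2 (by linarith), fun h2 => absurd h2.2 (by linarith)⟩
    rw [hset12, hmeasU _ (measurableSet_Icc.union measurableSet_Ioi)]
    have hU12 : (Set.Icc a l13 ∪ Set.Ioi b) ∩ Set.Icc 0 1
        = Set.Icc a l13 ∪ Set.Ioc b 1 := by
      ext x
      simp only [Set.mem_inter_iff, Set.mem_union, Set.mem_Icc, Set.mem_Ioi, Set.mem_Ioc]
      constructor
      · rintro ⟨h1 | h1, h2, h3⟩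
        · exact Or.inl h1
        · exact Or.inr ⟨h1, h3⟩
      · rintro (⟨h1, h2⟩ | ⟨h1, h2⟩)
        · exact ⟨Or.inl ⟨h1, h2⟩, by linarith, by linarith⟩
        · exact ⟨Or.inr h1, by linarith, h2⟩
    have hdisj : Disjoint (Set.Icc a l13) (Set.Ioc b 1) := by
      apply Set.disjoint_left.mpr
      rintro x ⟨-, h1⟩ ⟨h2, -⟩
      linarith
    rw [hU12, measure_union hdisj measurableSet_Ioc, Real.volume_Icc, Real.volume_Ioc,
      ← ENNReal.ofReal_add (by linarith) (by linarith)]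
    congr 1
    rw [ha_def, hb_def]; ring
  · -- P(B1 = B3) = l13
    have hset : {ω | B1 ω = B3 ω} = X1 ⁻¹' {true} := by
      ext ω
      cases h3 : B3 ω <;> cases h1 : X1 ω <;> simp [B1, h3, h1]
    rw [hset, pX1]
  · -- P(B2 = B3) = l23
    have hset : {ω | B2 ω = B3 ω} = X2 ⁻¹' {true} := by
      ext ω
      cases h3 : B3 ω <;> cases h1 : X2 ω <;> simp [B2, h3, h1]
    rw [hset, pX2]
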